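/- Let z₁, …, z_m be unit vectors in ℂⁿ. Then for every positive integer k, (1/m²) ∑_{i=1}^{m} ∑_{j=1}^{m} |⟨z_i, z_j⟩|^{2k} ≥ C(n+k−1, k)⁻¹, where C(n+k−1, k) is the binomial coefficient. -/

import Mathlib

open scoped ComplexInnerProductSpace
open Finset
set_option maxHeartbeats 1000000

private lemma sum_swap4 {α β γ δ M : Type*} [Fintype α] [Fintype β] [Fintype γ] [Fintype δ]
    [AddCommMonoid M] (f : α → β → γ → δ → M) :
    ∑ x : α, ∑ y : β, ∑ i : γ, ∑ j : δ, f x y i j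
      = ∑ i : γ, ∑ j : δ, ∑ x : α, ∑ y : β, f x y i j := by
  calc ∑ x : α, ∑ y : β, ∑ i : γ, ∑ j : δ, f x y i j
      = ∑ x : α, ∑ i : γ, ∑ y : β, ∑ j : δ, f x y i j :=
        Finset.sum_congr rfl fun x _ => Finset.sum_comm
    _ = ∑ i : γ, ∑ x : α, ∑ y : β, ∑ j : δ, f x y i j := Finset.sum_comm
    _ = ∑ i : γ, ∑ x : α, ∑ j : δ, ∑ y : β, f x y i j :=
        Finset.sum_congr rfl fun i _ => Finset.sum_congr rfl fun x _ => Finset.sum_comm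
    _ = ∑ i : γ, ∑ j : δ, ∑ x : α, ∑ y : β, f x y i j :=
        Finset.sum_congr rfl fun i _ => Finset.sum_comm

/-- Welch's average cross-correlation bound for unit vectors in `ℂⁿ`. -/
theorem welch_average_bound (n m : ℕ) (hm : 0 < m)
    (z : Fin m → EuclideanSpace ℂ (Fin n)) (hz : ∀ i, ‖z i‖ = 1)
    (k : ℕ) (hk : 0 < k) :
    (1 / (m : ℝ) ^ 2) * ∑ i : Fin m, ∑ j : Fin m, ‖⟪z i, z j⟫‖ ^ (2 * k)
      ≥ ((Nat.choose (n + k - 1) k : ℝ))⁻¹ := by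
  classical
  rcases Nat.eq_zero_or_pos n with hn | hn
  · subst hn
    have h0 : (0 + k - 1).choose k = 0 := Nat.choose_eq_zero_of_lt (by omega)
    rw [h0]
    push_cast
    rw [inv_zero]
    have : (0:ℝ) ≤ ∑ i : Fin m, ∑ j : Fin m, ‖⟪z i, z j⟫‖ ^ (2 * k) := by
      refine Finset.sum_nonneg fun i _ => Finset.sum_nonneg fun j _ => ?_
      positivity
    positivity
  set d : ℕ := (n + k - 1).choose k with hd
  have hdpos : 0 < d := Nat.choose_pos (by omega)
  have hcard : Fintype.card (Sym (Fin n) k) = d := by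
    rw [Sym.card_sym_eq_multichoose, Nat.multichoose_eq, Fintype.card_fin]
  set Q : (Fin k → Fin n) → Sym (Fin n) k :=
    fun g => ⟨Multiset.map g Finset.univ.val, by simp⟩ with hQ
  set W : Sym (Fin n) k → Fin m → ℂ := fun s i => (s.1.map (z i)).prod with hW
  have hWQ : ∀ (g : Fin k → Fin n) (i : Fin m), W (Q g) i = ∏ t, z i (g t) := by
    intro g i
    simp only [hW, hQ, Multiset.map_map]
    rfl
  have hpow : ∀ i j, ⟪z i, z j⟫ ^ k
      = ∑ g : Fin k → Fin n, (starRingEnd ℂ) (W (Q g) i) * W (Q g) j := by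
    intro i j
    have h1 : ⟪z i, z j⟫ = ∑ a, (starRingEnd ℂ) (z i a) * z j a := by
      simp [PiLp.inner_apply, RCLike.inner_apply]
      exact Finset.sum_congr rfl fun _ _ => mul_comm _ _
    rw [h1, Fintype.sum_pow]
    refine Finset.sum_congr rfl fun g _ => ?_
    rw [hWQ, hWQ, Finset.prod_mul_distrib, map_prod]
  set T : Sym (Fin n) k → Sym (Fin n) k → ℂ :=
    fun s t => ∑ i, (starRingEnd ℂ) (W s i) * W t i with hT
  set N : Sym (Fin n) k → ℕ :=
    fun s => (Finset.univ.filter (fun g : Fin k → Fin n => Q g = s)).card with hN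
  -- fiberwise reduction
  have fib : ∀ (F : Sym (Fin n) k → ℂ),
      ∑ a : Fin k → Fin n, F (Q a) = ∑ s : Sym (Fin n) k, (N s : ℂ) * F s := by
    intro F
    rw [← Finset.sum_fiberwise' Finset.univ Q F]
    exact Finset.sum_congr rfl fun s _ => by rw [Finset.sum_const, hN, nsmul_eq_mul]
  -- expansion of the modulus squared
  have expand : ∀ i j, (⟪z i, z j⟫ ^ k) * (starRingEnd ℂ) (⟪z i, z j⟫ ^ k)
      = ∑ a : Fin k → Fin n, ∑ b : Fin k → Fin n,
          ((starRingEnd ℂ) (W (Q a) i) * W (Q a) j) * (W (Q b) i * (starRingEnd ℂ) (W (Q b) j)) := by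
    intro i j
    rw [hpow, map_sum, Finset.sum_mul_sum]
    exact Finset.sum_congr rfl fun a _ => Finset.sum_congr rfl fun b _ => by
      rw [map_mul, Complex.conj_conj]
  have hswap : ∑ i, ∑ j, (⟪z i, z j⟫ ^ k) * (starRingEnd ℂ) (⟪z i, z j⟫ ^ k)
      = ∑ s : Sym (Fin n) k, ∑ t : Sym (Fin n) k,
          (N s : ℂ) * (N t : ℂ) * (T s t * (starRingEnd ℂ) (T s t)) := by
    calc ∑ i, ∑ j, (⟪z i, z j⟫ ^ k) * (starRingEnd ℂ) (⟪z i, z j⟫ ^ k)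
        = ∑ i, ∑ j, ∑ a : Fin k → Fin n, ∑ b : Fin k → Fin n,
            ((starRingEnd ℂ) (W (Q a) i) * W (Q a) j) * (W (Q b) i * (starRingEnd ℂ) (W (Q b) j)) := by
          exact Finset.sum_congr rfl fun i _ => Finset.sum_congr rfl fun j _ => expand i j
      _ = ∑ a : Fin k → Fin n, ∑ b : Fin k → Fin n, ∑ i, ∑ j,
            ((starRingEnd ℂ) (W (Q a) i) * W (Q a) j) * (W (Q b) i * (starRingEnd ℂ) (W (Q b) j)) :=
          sum_swap4 (fun (i j : Fin m) (a b : Fin k → Fin n) =>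
            ((starRingEnd ℂ) (W (Q a) i) * W (Q a) j) * (W (Q b) i * (starRingEnd ℂ) (W (Q b) j)))
      _ = ∑ a : Fin k → Fin n, ∑ b : Fin k → Fin n,
            T (Q a) (Q b) * (starRingEnd ℂ) (T (Q a) (Q b)) := by
          refine Finset.sum_congr rfl fun a _ => Finset.sum_congr rfl fun b _ => ?_
          rw [hT, map_sum, Finset.sum_mul_sum]
          refine Finset.sum_congr rfl fun x _ => Finset.sum_congr rfl fun y _ => ?_
          simp only [map_mul, Complex.conj_conj]
          ring
      _ = ∑ s : Sym (Fin n) k, (N s : ℂ) * ∑ b : Fin k → Fin n,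
            T s (Q b) * (starRingEnd ℂ) (T s (Q b)) :=
          fib (fun s => ∑ b : Fin k → Fin n, T s (Q b) * (starRingEnd ℂ) (T s (Q b)))
      _ = ∑ s : Sym (Fin n) k, ∑ t : Sym (Fin n) k,
            (N s : ℂ) * (N t : ℂ) * (T s t * (starRingEnd ℂ) (T s t)) := by
          refine Finset.sum_congr rfl fun s _ => ?_
          rw [fib (fun t => T s t * (starRingEnd ℂ) (T s t)), Finset.mul_sum]
          exact Finset.sum_congr rfl fun t _ => by ring
  -- trace identity
  have hTdiag : ∀ s, T s s = ((∑ i, Complex.normSq (W s i) : ℝ) : ℂ) := by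
    intro s
    rw [hT]
    push_cast
    exact Finset.sum_congr rfl fun i _ => by
      rw [mul_comm, Complex.mul_conj]
  have htrace : ∑ s : Sym (Fin n) k, (N s : ℝ) * (T s s).re = m := by
    have h1 : ∑ s : Sym (Fin n) k, (N s : ℂ) * T s s = (m : ℂ) := by
      rw [← fib (fun s => T s s)]
      have h2 : ∀ a : Fin k → Fin n, T (Q a) (Q a)
          = ∑ i, (starRingEnd ℂ) (W (Q a) i) * W (Q a) i := fun a => rfl
      calc ∑ a : Fin k → Fin n, T (Q a) (Q a)
          = ∑ a : Fin k → Fin n, ∑ i, (starRingEnd ℂ) (W (Q a) i) * W (Q a) i :=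
            Finset.sum_congr rfl fun a _ => rfl
        _ = ∑ i, ∑ a : Fin k → Fin n, (starRingEnd ℂ) (W (Q a) i) * W (Q a) i :=
            Finset.sum_comm
        _ = ∑ i : Fin m, ⟪z i, z i⟫ ^ k :=
            Finset.sum_congr rfl fun i _ => (hpow i i).symm
        _ = (m : ℂ) := by
            have : ∀ i : Fin m, ⟪z i, z i⟫ = 1 := by
              intro i
              rw [inner_self_eq_norm_sq_to_K, hz]
              norm_num
            simp [this, hz]
    have := congrArg Complex.re h1
    simpa [Complex.re_sum] using this
  -- the actual LHS
  set A : ℝ := ∑ i : Fin m, ∑ j : Fin m, ‖⟪z i, z j⟫‖ ^ (2 * k) with hA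
  have hA2 : A = ∑ s : Sym (Fin n) k, ∑ t : Sym (Fin n) k,
      (N s : ℝ) * (N t : ℝ) * Complex.normSq (T s t) := by
    have h1 : ∀ i j : Fin m, ‖⟪z i, z j⟫‖ ^ (2 * k)
        = ((⟪z i, z j⟫ ^ k) * (starRingEnd ℂ) (⟪z i, z j⟫ ^ k)).re := by
      intro i j
      rw [Complex.mul_conj]
      rw [Complex.ofReal_re]
      rw [Complex.normSq_eq_norm_sq, norm_pow, ← pow_mul, mul_comm k 2]
    calc A = (∑ i, ∑ j, (⟪z i, z j⟫ ^ k) * (starRingEnd ℂ) (⟪z i, z j⟫ ^ k)).re := by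
          rw [hA, Complex.re_sum]
          exact Finset.sum_congr rfl fun i _ => by
            rw [Complex.re_sum]
            exact Finset.sum_congr rfl fun j _ => h1 i j
      _ = _ := by
          rw [hswap, Complex.re_sum]
          refine Finset.sum_congr rfl fun s _ => ?_
          rw [Complex.re_sum]
          refine Finset.sum_congr rfl fun t _ => ?_
          rw [Complex.mul_conj]
          push_cast
          simp
  -- diagonal bound
  have hdiagbd : ∑ s : Sym (Fin n) k, ((N s : ℝ) * (T s s).re) ^ 2 ≤ A := by
    rw [hA2]
    have step1 : ∑ s : Sym (Fin n) k, ((N s : ℝ) * (T s s).re) ^ 2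
        ≤ ∑ s : Sym (Fin n) k, (N s : ℝ) * (N s : ℝ) * Complex.normSq (T s s) := by
      refine Finset.sum_le_sum fun s _ => ?_
      have : (T s s).re ^ 2 ≤ Complex.normSq (T s s) := by
        rw [Complex.normSq_apply]
        nlinarith [sq_nonneg (T s s).im]
      nlinarith [Nat.cast_nonneg (α := ℝ) (N s), Complex.normSq_nonneg (T s s)]
    refine step1.trans (Finset.sum_le_sum fun s _ => ?_)
    refine Finset.single_le_sum (f := fun t => (N s : ℝ) * (N t : ℝ) * Complex.normSq (T s t))
      (fun t _ => ?_) (Finset.mem_univ s)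
    exact mul_nonneg (mul_nonneg (Nat.cast_nonneg _) (Nat.cast_nonneg _))
      (Complex.normSq_nonneg _)
  -- Chebyshev
  have hcheb : (m : ℝ) ^ 2 ≤ (d : ℝ) * A := by
    have h1 : (∑ s : Sym (Fin n) k, (N s : ℝ) * (T s s).re) ^ 2
        ≤ (Fintype.card (Sym (Fin n) k) : ℝ)
          * ∑ s : Sym (Fin n) k, ((N s : ℝ) * (T s s).re) ^ 2 := by
      simpa using sq_sum_le_card_mul_sum_sq
        (s := (Finset.univ : Finset (Sym (Fin n) k)))
        (f := fun s => (N s : ℝ) * (T s s).re)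
    rw [htrace, hcard] at h1
    calc (m : ℝ) ^ 2 ≤ (d : ℝ) * ∑ s : Sym (Fin n) k, ((N s : ℝ) * (T s s).re) ^ 2 := h1
      _ ≤ (d : ℝ) * A := by
          exact mul_le_mul_of_nonneg_left hdiagbd (by positivity)
  -- finish
  have hm' : (0:ℝ) < (m:ℝ) ^ 2 := by positivity
  have hd' : (0:ℝ) < (d:ℝ) := by exact_mod_cast hdpos
  rw [ge_iff_le, one_div, inv_mul_eq_div, inv_eq_one_div, div_le_div_iff₀ hd' hm']
  nlinarith
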